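/- Let n ≥ 1 be an integer, 0 < R₁ < R₂, and let a, b be vectors in a real normed vector space F. Define f : ℝⁿ \ {0} → F by f(x) = a + (log(‖x‖/R₁)/log(R₂/R₁)) · (b − a). Then for every real p with p ≠ n, ∫_{ {x : R₁ < ‖x‖ < R₂} } ‖Df(x)‖^p dx = n · Vol(B(0,1)) · (‖b − a‖/log(R₂/R₁))^p · (R₂^{n−p} − R₁^{n−p})/(n−p), where ‖Df(x)‖ denotes the operator norm of the Fréchet derivative of f at x, the integral is with respect to Lebesgue measure on ℝⁿ, and B(0,1) is the Euclidean unit ball. -/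

import Mathlib

open MeasureTheory

lemma aux_norm_fderiv {E : Type*} [NormedAddCommGroup E] [InnerProductSpace ℝ E] [Nontrivial E]
    {F : Type*} [NormedAddCommGroup F] [NormedSpace ℝ F]
    (x : E) (hx : x ≠ 0) (R₁ c : ℝ) (hR : 0 < R₁) (hc : 0 < c) (a b : F) :
    ‖fderiv ℝ (fun y : E => a + (Real.log (‖y‖ / R₁) / c) • (b - a)) x‖
      = ‖b - a‖ / (c * ‖x‖) := by
  have hx' : (0:ℝ) < ‖x‖ := norm_pos_iff.2 hx
  have hd : DifferentiableAt ℝ (fun y : E => ‖y‖) x :=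
    (differentiableAt_id.norm ℝ (by simpa using hx))
  set N := fderiv ℝ (fun y : E => ‖y‖) x with hNdef
  have hN : HasFDerivAt (fun y : E => ‖y‖) N x := hd.hasFDerivAt
  have h2 : HasFDerivAt (fun y : E => R₁⁻¹ * ‖y‖) (R₁⁻¹ • N) x := hN.const_mul R₁⁻¹
  have hne : R₁⁻¹ * ‖x‖ ≠ 0 := by positivity
  have h3 : HasFDerivAt (fun y : E => Real.log (R₁⁻¹ * ‖y‖))
      ((R₁⁻¹ * ‖x‖)⁻¹ • (R₁⁻¹ • N)) x :=
    by have := (Real.hasDerivAt_log hne).comp_hasFDerivAt x h2; exact this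
  have h4 : HasFDerivAt (fun y : E => c⁻¹ * Real.log (R₁⁻¹ * ‖y‖))
      (c⁻¹ • ((R₁⁻¹ * ‖x‖)⁻¹ • (R₁⁻¹ • N))) x := h3.const_mul c⁻¹
  have h5 : HasFDerivAt (fun y : E => a + (c⁻¹ * Real.log (R₁⁻¹ * ‖y‖)) • (b - a))
      ((c⁻¹ • ((R₁⁻¹ * ‖x‖)⁻¹ • (R₁⁻¹ • N))).smulRight (b - a)) x := by
    have := (h4.smul (hasFDerivAt_const (b - a) x)).const_add a
    simpa using this
  have heq : (fun y : E => a + (Real.log (‖y‖ / R₁) / c) • (b - a))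
      = fun y : E => a + (c⁻¹ * Real.log (R₁⁻¹ * ‖y‖)) • (b - a) := by
    funext y
    rw [div_eq_inv_mul, div_eq_inv_mul]
  rw [heq, h5.fderiv, ContinuousLinearMap.norm_smulRight_apply, norm_smul, norm_smul,
    norm_smul, norm_fderiv_norm hd]
  have : ‖c⁻¹‖ * (‖(R₁⁻¹ * ‖x‖)⁻¹‖ * (‖R₁⁻¹‖ * 1)) = (c * ‖x‖)⁻¹ := by
    rw [Real.norm_eq_abs, Real.norm_eq_abs, Real.norm_eq_abs,
      abs_of_pos (by positivity), abs_of_pos (by positivity), abs_of_pos (by positivity)]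
    field_simp
  rw [this, div_eq_mul_inv, mul_comm]

/-- Euclidean core of Lemma 4.3: the `p`-energy of the logarithmic comparison map
`f(x) = a + (log(‖x‖/R₁)/log(R₂/R₁))(b − a)` on the annulus `{R₁ < ‖x‖ < R₂}` equals
`n·Vol(B(0,1))·(‖b−a‖/log(R₂/R₁))^p·(R₂^{n−p} − R₁^{n−p})/(n−p)` for every real `p ≠ n`. -/
theorem integral_annulus_norm_fderiv_log_comparison_map
    (n : ℕ) (hn : 1 ≤ n) (R₁ R₂ : ℝ) (h1 : 0 < R₁) (h12 : R₁ < R₂)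
    {F : Type*} [NormedAddCommGroup F] [NormedSpace ℝ F] (a b : F)
    (p : ℝ) (hp : p ≠ n) :
    ∫ x in {x : EuclideanSpace ℝ (Fin n) | R₁ < ‖x‖ ∧ ‖x‖ < R₂},
        ‖fderiv ℝ (fun y : EuclideanSpace ℝ (Fin n) =>
            a + (Real.log (‖y‖ / R₁) / Real.log (R₂ / R₁)) • (b - a)) x‖ ^ p =
      (n * (volume (Metric.ball (0 : EuclideanSpace ℝ (Fin n)) 1)).toReal) *
        (‖b - a‖ / Real.log (R₂ / R₁)) ^ p *
        ((R₂ ^ ((n : ℝ) - p) - R₁ ^ ((n : ℝ) - p)) / ((n : ℝ) - p)) := by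
  set E := EuclideanSpace ℝ (Fin n)
  haveI : Nonempty (Fin n) := ⟨⟨0, hn⟩⟩
  haveI : Nontrivial E := inferInstance
  set c := Real.log (R₂ / R₁) with hcdef
  have hc : 0 < c := Real.log_pos ((one_lt_div h1).2 h12)
  set C := (‖b - a‖ / c) ^ p with hCdef
  have hC : 0 ≤ ‖b - a‖ / c := by positivity
  set s := {x : E | R₁ < ‖x‖ ∧ ‖x‖ < R₂} with hsdef
  have hspre : s = (fun x : E => ‖x‖) ⁻¹' Set.Ioo R₁ R₂ := rfl
  have hs : MeasurableSet s := hspre ▸ measurable_norm measurableSet_Ioo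
  set g : ℝ → ℝ := Set.indicator (Set.Ioo R₁ R₂) (fun t => C * t ^ (-p)) with hgdef
  have step1 : ∫ x in s,
      ‖fderiv ℝ (fun y : E =>
          a + (Real.log (‖y‖ / R₁) / c) • (b - a)) x‖ ^ p = ∫ x : E, g ‖x‖ := by
    have : ∀ x : E, g ‖x‖ = Set.indicator s (fun x : E => C * ‖x‖ ^ (-p)) x := by
      intro x
      by_cases h : x ∈ s
      · rw [Set.indicator_of_mem h, hgdef, Set.indicator_of_mem (Set.mem_Ioo.mpr ⟨h.1, h.2⟩)]
      · rw [Set.indicator_of_notMem h, hgdef,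
          Set.indicator_of_notMem (fun hm => h (Set.mem_Ioo.mp hm))]
    simp_rw [this]
    rw [integral_indicator hs]
    refine setIntegral_congr_fun hs fun x hx => ?_
    have hx1 : (0:ℝ) < ‖x‖ := lt_trans h1 hx.1
    have hx0 : x ≠ 0 := fun h => by simp [h] at hx1
    rw [aux_norm_fderiv x hx0 R₁ c h1 hc a b]
    have : ‖b - a‖ / (c * ‖x‖) = (‖b - a‖ / c) * ‖x‖⁻¹ := by
      field_simp
    rw [this, Real.mul_rpow hC (by positivity), ← Real.rpow_neg_one ‖x‖,
      ← Real.rpow_mul (norm_nonneg x), neg_one_mul]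
  rw [step1, integral_fun_norm_addHaar volume g, finrank_euclideanSpace_fin]
  have step2 : ∫ y in Set.Ioi (0:ℝ), y ^ (n - 1) • g y
      = C * ((R₂ ^ ((n:ℝ) - p) - R₁ ^ ((n:ℝ) - p)) / ((n:ℝ) - p)) := by
    have hind : ∀ y : ℝ, y ^ (n - 1) • g y
        = Set.indicator (Set.Ioo R₁ R₂) (fun t => t ^ (n - 1) * (C * t ^ (-p))) y := by
      intro y
      by_cases h : y ∈ Set.Ioo R₁ R₂
      · rw [hgdef, Set.indicator_of_mem h, Set.indicator_of_mem h, smul_eq_mul]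
      · rw [hgdef, Set.indicator_of_notMem h, Set.indicator_of_notMem h, smul_zero]
    simp_rw [hind]
    rw [integral_indicator measurableSet_Ioo, Measure.restrict_restrict measurableSet_Ioo,
      show Set.Ioo R₁ R₂ ∩ Set.Ioi (0:ℝ) = Set.Ioo R₁ R₂ from
        Set.inter_eq_self_of_subset_left fun y hy => lt_trans h1 hy.1]
    have hcong : ∀ y ∈ Set.Ioo R₁ R₂,
        y ^ (n - 1) * (C * y ^ (-p)) = C * y ^ ((n:ℝ) - 1 - p) := by
      intro y hy
      have hy0 : (0:ℝ) < y := lt_trans h1 hy.1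
      have h1' : (y:ℝ) ^ (n - 1) = y ^ ((n:ℝ) - 1) := by
        rw [← Real.rpow_natCast y (n - 1), Nat.cast_sub hn, Nat.cast_one]
      have h2' : ((n:ℝ) - 1 - p) = ((n:ℝ) - 1) + (-p) := by ring
      rw [h1', h2', Real.rpow_add hy0]
      ring
    rw [setIntegral_congr_fun measurableSet_Ioo hcong, integral_const_mul,
      ← integral_Ioc_eq_integral_Ioo, ← intervalIntegral.integral_of_le h12.le]
    have hr : (n:ℝ) - 1 - p ≠ -1 := by
      intro h
      apply hp
      linarith [sub_eq_iff_eq_add.mp h]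
    have h0 : (0:ℝ) ∉ Set.uIcc R₁ R₂ := by
      rw [Set.uIcc_of_le h12.le]
      intro h
      exact absurd h.1 (not_le.2 h1)
    rw [integral_rpow (Or.inr ⟨hr, h0⟩)]
    have : (n:ℝ) - 1 - p + 1 = (n:ℝ) - p := by ring
    rw [this]
  rw [step2]
  rw [nsmul_eq_mul, smul_eq_mul]
  simp only [Measure.real]
  ring
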